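/- arXiv:2011.01572 — 2 statements merged into one kernel-verified Lean document; each statement's English description precedes it below -/
import Mathlib

section
/- The assignments W_{-k} ↦ W_{k+1}, W_{k+1} ↦ W_{-k}, G_{k+1} ↦ G̃_{k+1}, G̃_{k+1} ↦ G_{k+1} (k ∈ ℕ) extend to an F-algebra automorphism σ of 𝒜q, and the assignments W_{-k} ↦ W_{-k}, W_{k+1} ↦ W_{k+1}, G_{k+1} ↦ G̃_{k+1}, G̃_{k+1} ↦ G_{k+1} extend to an F-algebra antiautomorphism S of 𝒜q (an F-linear bijection with S(1) = 1 and S(xy) = S(y)S(x) for all x, y). -/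
/- STATEMENT 2: the automorphism σ and the antiautomorphism S of 𝒜q. -/

noncomputable section

namespace Alt

/-- The base field `F = ℚ(q)`. -/
abbrev F : Type := RatFunc ℚ

/-- The indeterminate `q`. -/
def q : F := RatFunc.X

/-- Commutator `[x,y] = xy - yx`. -/
def br {A : Type*} [Ring A] (x y : A) : A := x * y - y * x

/-- `q`-commutator `[x,y]_q = q·xy - q⁻¹·yx`. -/
def qbr {A : Type*} [Ring A] [Algebra F A] (x y : A) : A :=
  q • (x * y) - q⁻¹ • (y * x)

/-- `q⁻¹`-commutator `[x,y]_{q⁻¹} = q⁻¹·xy - q·yx`. -/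
def qbr' {A : Type*} [Ring A] [Algebra F A] (x y : A) : A :=
  q⁻¹ • (x * y) - q • (y * x)

/-- Generators of the algebra `𝒜q`: `wm k ↦ W_{-k}`, `wp k ↦ W_{k+1}`,
`g k ↦ G_{k+1}`, `gt k ↦ G̃_{k+1}`. -/
inductive Gen : Type
  | wm : ℕ → Gen
  | wp : ℕ → Gen
  | g : ℕ → Gen
  | gt : ℕ → Gen

/-- The free `F`-algebra on the generators. -/
abbrev FA : Type := FreeAlgebra F Gen

/-- `W_{-k}` in the free algebra. -/
def fWm (k : ℕ) : FA := FreeAlgebra.ι F (Gen.wm k)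
/-- `W_{k+1}` in the free algebra. -/
def fWp (k : ℕ) : FA := FreeAlgebra.ι F (Gen.wp k)
/-- `G_{k+1}` in the free algebra. -/
def fG (k : ℕ) : FA := FreeAlgebra.ι F (Gen.g k)
/-- `G̃_{k+1}` in the free algebra. -/
def fGt (k : ℕ) : FA := FreeAlgebra.ι F (Gen.gt k)

/-- The defining relations of `𝒜q` (with parameter `ρ`). -/
inductive rel (ρ : F) : FA → FA → Prop
  | r1a (k : ℕ) : rel ρ (br (fWm 0) (fWp k)) ((q + q⁻¹)⁻¹ • (fGt k - fG k))
  | r1b (k : ℕ) : rel ρ (br (fWm k) (fWp 0)) ((q + q⁻¹)⁻¹ • (fGt k - fG k))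
  | r2a (k : ℕ) : rel ρ (qbr (fWm 0) (fG k)) (ρ • fWm (k + 1))
  | r2b (k : ℕ) : rel ρ (qbr (fGt k) (fWm 0)) (ρ • fWm (k + 1))
  | r3a (k : ℕ) : rel ρ (qbr (fG k) (fWp 0)) (ρ • fWp (k + 1))
  | r3b (k : ℕ) : rel ρ (qbr (fWp 0) (fGt k)) (ρ • fWp (k + 1))
  | r4a (k l : ℕ) : rel ρ (br (fWm k) (fWm l)) 0
  | r4b (k l : ℕ) : rel ρ (br (fWp k) (fWp l)) 0
  | r5 (k l : ℕ) : rel ρ (br (fWm k) (fWp l) + br (fWp k) (fWm l)) 0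
  | r6 (k l : ℕ) : rel ρ (br (fWm k) (fG l) + br (fG k) (fWm l)) 0
  | r7 (k l : ℕ) : rel ρ (br (fWm k) (fGt l) + br (fGt k) (fWm l)) 0
  | r8 (k l : ℕ) : rel ρ (br (fWp k) (fG l) + br (fG k) (fWp l)) 0
  | r9 (k l : ℕ) : rel ρ (br (fWp k) (fGt l) + br (fGt k) (fWp l)) 0
  | r10a (k l : ℕ) : rel ρ (br (fG k) (fG l)) 0
  | r10b (k l : ℕ) : rel ρ (br (fGt k) (fGt l)) 0
  | r11 (k l : ℕ) : rel ρ (br (fGt k) (fG l) + br (fG k) (fGt l)) 0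

/-- The algebra `𝒜q`: the quotient of the free algebra by the two-sided ideal
generated by the defining relations. -/
abbrev Aq (ρ : F) : Type := RingQuot (rel ρ)

/-- The generator `W_{-k}` of `𝒜q`. -/
def Wm (ρ : F) (k : ℕ) : Aq ρ := RingQuot.mkAlgHom F (rel ρ) (fWm k)
/-- The generator `W_{k+1}` of `𝒜q`. -/
def Wp (ρ : F) (k : ℕ) : Aq ρ := RingQuot.mkAlgHom F (rel ρ) (fWp k)
/-- The generator `G_{k+1}` of `𝒜q`. -/
def G (ρ : F) (k : ℕ) : Aq ρ := RingQuot.mkAlgHom F (rel ρ) (fG k)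
/-- The generator `G̃_{k+1}` of `𝒜q`. -/
def Gt (ρ : F) (k : ℕ) : Aq ρ := RingQuot.mkAlgHom F (rel ρ) (fGt k)

/- ### Auxiliary material for statement 2 -/

open MulOpposite

lemma br_swap {A : Type*} [Ring A] (x y : A) : br x y = - br y x := by
  simp [br]

lemma br_swap_eq {A : Type*} [Ring A] [Algebra F A] {a b : A} {c : F} {u v : A}
    (h : br a b = c • (u - v)) : br b a = c • (v - u) := by
  rw [br_swap, h, ← smul_neg, neg_sub]

lemma br_swap_zero {A : Type*} [Ring A] {a b : A} (h : br a b = 0) : br b a = 0 := by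
  rw [br_swap, h, neg_zero]

@[simp] lemma map_br {A B : Type*} [Ring A] [Ring B] [Algebra F A] [Algebra F B]
    (f : A →ₐ[F] B) (x y : A) : f (br x y) = br (f x) (f y) := by
  simp [br]

@[simp] lemma map_qbr {A B : Type*} [Ring A] [Ring B] [Algebra F A] [Algebra F B]
    (f : A →ₐ[F] B) (x y : A) : f (qbr x y) = qbr (f x) (f y) := by
  simp [qbr]

@[simp] lemma op_br {A : Type*} [Ring A] (a b : A) : br (op a) (op b) = op (br b a) := by
  simp [br, ← op_mul, ← op_sub]

@[simp] lemma op_qbr {A : Type*} [Ring A] [Algebra F A] (a b : A) :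
    qbr (op a) (op b) = op (qbr b a) := by
  simp [qbr, ← op_mul, ← op_smul, ← op_sub]

section Rels

variable (ρ : F)

private lemma mkrel {ρ : F} {x y : FA} (h : rel ρ x y) :
    RingQuot.mkAlgHom F (rel ρ) x = RingQuot.mkAlgHom F (rel ρ) y :=
  RingQuot.mkAlgHom_rel F h

lemma R1a (k : ℕ) : br (Wm ρ 0) (Wp ρ k) = (q + q⁻¹)⁻¹ • (Gt ρ k - G ρ k) := by
  simpa [Wm, Wp, G, Gt] using mkrel (rel.r1a (ρ := ρ) k)

lemma R1b (k : ℕ) : br (Wm ρ k) (Wp ρ 0) = (q + q⁻¹)⁻¹ • (Gt ρ k - G ρ k) := by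
  simpa [Wm, Wp, G, Gt] using mkrel (rel.r1b (ρ := ρ) k)

lemma R2a (k : ℕ) : qbr (Wm ρ 0) (G ρ k) = ρ • Wm ρ (k + 1) := by
  simpa [Wm, G] using mkrel (rel.r2a (ρ := ρ) k)

lemma R2b (k : ℕ) : qbr (Gt ρ k) (Wm ρ 0) = ρ • Wm ρ (k + 1) := by
  simpa [Wm, Gt] using mkrel (rel.r2b (ρ := ρ) k)

lemma R3a (k : ℕ) : qbr (G ρ k) (Wp ρ 0) = ρ • Wp ρ (k + 1) := by
  simpa [Wp, G] using mkrel (rel.r3a (ρ := ρ) k)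

lemma R3b (k : ℕ) : qbr (Wp ρ 0) (Gt ρ k) = ρ • Wp ρ (k + 1) := by
  simpa [Wp, Gt] using mkrel (rel.r3b (ρ := ρ) k)

lemma R4a (k l : ℕ) : br (Wm ρ k) (Wm ρ l) = 0 := by
  simpa [Wm] using mkrel (rel.r4a (ρ := ρ) k l)

lemma R4b (k l : ℕ) : br (Wp ρ k) (Wp ρ l) = 0 := by
  simpa [Wp] using mkrel (rel.r4b (ρ := ρ) k l)

lemma R5 (k l : ℕ) : br (Wm ρ k) (Wp ρ l) + br (Wp ρ k) (Wm ρ l) = 0 := by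
  simpa [Wm, Wp] using mkrel (rel.r5 (ρ := ρ) k l)

lemma R6 (k l : ℕ) : br (Wm ρ k) (G ρ l) + br (G ρ k) (Wm ρ l) = 0 := by
  simpa [Wm, G] using mkrel (rel.r6 (ρ := ρ) k l)

lemma R7 (k l : ℕ) : br (Wm ρ k) (Gt ρ l) + br (Gt ρ k) (Wm ρ l) = 0 := by
  simpa [Wm, Gt] using mkrel (rel.r7 (ρ := ρ) k l)

lemma R8 (k l : ℕ) : br (Wp ρ k) (G ρ l) + br (G ρ k) (Wp ρ l) = 0 := by
  simpa [Wp, G] using mkrel (rel.r8 (ρ := ρ) k l)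

lemma R9 (k l : ℕ) : br (Wp ρ k) (Gt ρ l) + br (Gt ρ k) (Wp ρ l) = 0 := by
  simpa [Wp, Gt] using mkrel (rel.r9 (ρ := ρ) k l)

lemma R10a (k l : ℕ) : br (G ρ k) (G ρ l) = 0 := by
  simpa [G] using mkrel (rel.r10a (ρ := ρ) k l)

lemma R10b (k l : ℕ) : br (Gt ρ k) (Gt ρ l) = 0 := by
  simpa [Gt] using mkrel (rel.r10b (ρ := ρ) k l)

lemma R11 (k l : ℕ) : br (Gt ρ k) (G ρ l) + br (G ρ k) (Gt ρ l) = 0 := by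
  simpa [G, Gt] using mkrel (rel.r11 (ρ := ρ) k l)

end Rels

/-- Images of the generators under `σ`. -/
def σg (ρ : F) : Gen → Aq ρ
  | .wm k => Wp ρ k
  | .wp k => Wm ρ k
  | .g k => Gt ρ k
  | .gt k => G ρ k

lemma σrel (ρ : F) : ∀ ⦃x y : FA⦄, rel ρ x y →
    FreeAlgebra.lift F (σg ρ) x = FreeAlgebra.lift F (σg ρ) y := by
  intro x y h
  induction h with simp only [map_br, map_qbr, map_smul, map_sub, map_add, map_zero,
    fWm, fWp, fG, fGt, FreeAlgebra.lift_ι_apply, σg]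
  | r1a k => exact br_swap_eq (R1b ρ k)
  | r1b k => exact br_swap_eq (R1a ρ k)
  | r2a k => exact R3b ρ k
  | r2b k => exact R3a ρ k
  | r3a k => exact R2b ρ k
  | r3b k => exact R2a ρ k
  | r4a k l => exact R4b ρ k l
  | r4b k l => exact R4a ρ k l
  | r5 k l => rw [add_comm]; exact R5 ρ k l
  | r6 k l => exact R9 ρ k l
  | r7 k l => exact R8 ρ k l
  | r8 k l => exact R7 ρ k l
  | r9 k l => exact R6 ρ k l
  | r10a k l => exact R10b ρ k l
  | r10b k l => exact R10a ρ k l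
  | r11 k l => rw [add_comm]; exact R11 ρ k l

/-- The automorphism `σ` as an algebra homomorphism. -/
def σh (ρ : F) : Aq ρ →ₐ[F] Aq ρ :=
  RingQuot.liftAlgHom F ⟨FreeAlgebra.lift F (σg ρ), σrel ρ⟩

@[simp] lemma σh_Wm (ρ : F) (k : ℕ) : σh ρ (Wm ρ k) = Wp ρ k := by
  simp [σh, Wm, RingQuot.liftAlgHom_mkAlgHom_apply, fWm, σg]

@[simp] lemma σh_Wp (ρ : F) (k : ℕ) : σh ρ (Wp ρ k) = Wm ρ k := by
  simp [σh, Wp, RingQuot.liftAlgHom_mkAlgHom_apply, fWp, σg]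

@[simp] lemma σh_G (ρ : F) (k : ℕ) : σh ρ (G ρ k) = Gt ρ k := by
  simp [σh, G, RingQuot.liftAlgHom_mkAlgHom_apply, fG, σg]

@[simp] lemma σh_Gt (ρ : F) (k : ℕ) : σh ρ (Gt ρ k) = G ρ k := by
  simp [σh, Gt, RingQuot.liftAlgHom_mkAlgHom_apply, fGt, σg]

lemma σh_invol (ρ : F) (x : Aq ρ) : σh ρ (σh ρ x) = x := by
  obtain ⟨a, rfl⟩ := RingQuot.mkAlgHom_surjective F (rel ρ) x
  induction a using FreeAlgebra.induction with
  | grade0 r => simp [AlgHom.commutes]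
  | grade1 g =>
    cases g with
    | wm k => exact (show σh ρ (σh ρ (Wm ρ k)) = Wm ρ k by simp)
    | wp k => exact (show σh ρ (σh ρ (Wp ρ k)) = Wp ρ k by simp)
    | g k => exact (show σh ρ (σh ρ (G ρ k)) = G ρ k by simp)
    | gt k => exact (show σh ρ (σh ρ (Gt ρ k)) = Gt ρ k by simp)
  | mul a b ha hb => simp only [map_mul, ha, hb]
  | add a b ha hb => simp only [map_add, ha, hb]

/-- Images of the generators under `S`, in the opposite algebra. -/
def Sgo (ρ : F) : Gen → (Aq ρ)ᵐᵒᵖ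
  | .wm k => op (Wm ρ k)
  | .wp k => op (Wp ρ k)
  | .g k => op (Gt ρ k)
  | .gt k => op (G ρ k)

lemma Srel (ρ : F) : ∀ ⦃x y : FA⦄, rel ρ x y →
    FreeAlgebra.lift F (Sgo ρ) x = FreeAlgebra.lift F (Sgo ρ) y := by
  intro x y h
  induction h with simp only [map_br, map_qbr, map_smul, map_sub, map_add, map_zero,
    fWm, fWp, fG, fGt, FreeAlgebra.lift_ι_apply, Sgo, op_br, op_qbr,
    ← op_sub, ← op_smul, ← op_add]
  | r1a k => exact congrArg op (br_swap_eq (R1a ρ k))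
  | r1b k => exact congrArg op (br_swap_eq (R1b ρ k))
  | r2a k => exact congrArg op (R2b ρ k)
  | r2b k => exact congrArg op (R2a ρ k)
  | r3a k => exact congrArg op (R3b ρ k)
  | r3b k => exact congrArg op (R3a ρ k)
  | r4a k l => simpa using congrArg op (R4a ρ l k)
  | r4b k l => simpa using congrArg op (R4b ρ l k)
  | r5 k l => simpa [add_comm] using congrArg op (R5 ρ l k)
  | r6 k l => simpa [add_comm] using congrArg op (R7 ρ l k)
  | r7 k l => simpa [add_comm] using congrArg op (R6 ρ l k)
  | r8 k l => simpa [add_comm] using congrArg op (R9 ρ l k)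
  | r9 k l => simpa [add_comm] using congrArg op (R8 ρ l k)
  | r10a k l => simpa using congrArg op (R10b ρ l k)
  | r10b k l => simpa using congrArg op (R10a ρ l k)
  | r11 k l => simpa [add_comm] using congrArg op (R11 ρ l k)

/-- The antiautomorphism `S` as an algebra homomorphism into the opposite algebra. -/
def Sh (ρ : F) : Aq ρ →ₐ[F] (Aq ρ)ᵐᵒᵖ :=
  RingQuot.liftAlgHom F ⟨FreeAlgebra.lift F (Sgo ρ), Srel ρ⟩

@[simp] lemma Sh_Wm (ρ : F) (k : ℕ) : Sh ρ (Wm ρ k) = op (Wm ρ k) := by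
  simp [Sh, Wm, RingQuot.liftAlgHom_mkAlgHom_apply, fWm, Sgo]

@[simp] lemma Sh_Wp (ρ : F) (k : ℕ) : Sh ρ (Wp ρ k) = op (Wp ρ k) := by
  simp [Sh, Wp, RingQuot.liftAlgHom_mkAlgHom_apply, fWp, Sgo]

@[simp] lemma Sh_G (ρ : F) (k : ℕ) : Sh ρ (G ρ k) = op (Gt ρ k) := by
  simp [Sh, G, RingQuot.liftAlgHom_mkAlgHom_apply, fG, Sgo]

@[simp] lemma Sh_Gt (ρ : F) (k : ℕ) : Sh ρ (Gt ρ k) = op (G ρ k) := by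
  simp [Sh, Gt, RingQuot.liftAlgHom_mkAlgHom_apply, fGt, Sgo]

/-- The antiautomorphism `S` as a function. -/
def Sfun (ρ : F) (x : Aq ρ) : Aq ρ := unop (Sh ρ x)

lemma Sfun_mul (ρ : F) (x y : Aq ρ) : Sfun ρ (x * y) = Sfun ρ y * Sfun ρ x := by
  simp [Sfun, map_mul]

lemma Sfun_invol (ρ : F) (x : Aq ρ) : Sfun ρ (Sfun ρ x) = x := by
  obtain ⟨a, rfl⟩ := RingQuot.mkAlgHom_surjective F (rel ρ) x
  induction a using FreeAlgebra.induction with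
  | grade0 r => simp [Sfun, AlgHom.commutes, MulOpposite.algebraMap_apply]
  | grade1 g =>
    cases g with
    | wm k => exact (show Sfun ρ (Sfun ρ (Wm ρ k)) = Wm ρ k by simp [Sfun])
    | wp k => exact (show Sfun ρ (Sfun ρ (Wp ρ k)) = Wp ρ k by simp [Sfun])
    | g k => exact (show Sfun ρ (Sfun ρ (G ρ k)) = G ρ k by simp [Sfun])
    | gt k => exact (show Sfun ρ (Sfun ρ (Gt ρ k)) = Gt ρ k by simp [Sfun])
  | mul a b ha hb => simp only [map_mul, Sfun_mul, ha, hb]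
  | add a b ha hb => simp only [map_add, Sfun, MulOpposite.unop_add] at ha hb ⊢; rw [ha, hb]


/-- There is an `F`-algebra automorphism `σ` of `𝒜q` with
`σ(W_{-k}) = W_{k+1}`, `σ(W_{k+1}) = W_{-k}`, `σ(G_{k+1}) = G̃_{k+1}`,
`σ(G̃_{k+1}) = G_{k+1}`, and an `F`-linear antiautomorphism `S` (an `F`-linear
bijection with `S 1 = 1` and `S (xy) = S y * S x`) fixing `W_{-k}`, `W_{k+1}`
and exchanging `G_{k+1}` with `G̃_{k+1}`. -/
theorem statement2 (ρ : F) (hρ : ρ ≠ 0) :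
    (∃ σ : Aq ρ ≃ₐ[F] Aq ρ,
      (∀ k : ℕ, σ (Wm ρ k) = Wp ρ k) ∧ (∀ k : ℕ, σ (Wp ρ k) = Wm ρ k) ∧
      (∀ k : ℕ, σ (G ρ k) = Gt ρ k) ∧ (∀ k : ℕ, σ (Gt ρ k) = G ρ k)) ∧
    (∃ S : Aq ρ ≃ₗ[F] Aq ρ,
      S 1 = 1 ∧ (∀ x y : Aq ρ, S (x * y) = S y * S x) ∧
      (∀ k : ℕ, S (Wm ρ k) = Wm ρ k) ∧ (∀ k : ℕ, S (Wp ρ k) = Wp ρ k) ∧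
      (∀ k : ℕ, S (G ρ k) = Gt ρ k) ∧ (∀ k : ℕ, S (Gt ρ k) = G ρ k)) := by
  constructor
  · refine ⟨AlgEquiv.ofAlgHom (σh ρ) (σh ρ) (AlgHom.ext (σh_invol ρ)) (AlgHom.ext (σh_invol ρ)),
      ?_, ?_, ?_, ?_⟩ <;> intro k <;> (show σh ρ _ = _; simp [AlgEquiv.ofAlgHom])
  · refine ⟨{ toFun := Sfun ρ
              map_add' := by intro a b; simp [Sfun, map_add]
              map_smul' := by intro c a; simp [Sfun, map_smul]
              invFun := Sfun ρ
              left_inv := Sfun_invol ρ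
              right_inv := Sfun_invol ρ }, ?_, ?_, ?_, ?_, ?_, ?_⟩
    · show Sfun ρ 1 = 1; simp [Sfun]
    · exact fun x y => Sfun_mul ρ x y
    · intro k; show Sfun ρ _ = _; simp [Sfun]
    · intro k; show Sfun ρ _ = _; simp [Sfun]
    · intro k; show Sfun ρ _ = _; simp [Sfun]
    · intro k; show Sfun ρ _ = _; simp [Sfun]

end Alt
end
end

section
/- In 𝒜q the generators W_0 and W_1 satisfy the q-Serre relations: [W_0, [W_0, [W_0, W_1]_q]_{q⁻¹}] = 0 and [W_1, [W_1, [W_1, W_0]_q]_{q⁻¹}] = 0. -/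
/- STATEMENT 7: W_0 and W_1 satisfy the q-Serre relations in 𝒜q. -/

noncomputable section

namespace Alt

lemma q_ne : (q : F) ≠ 0 := by
  simpa [q] using RatFunc.X_ne_zero (K := ℚ)

lemma qsq_ne : (q ^ 2 + 1 : F) ≠ 0 := by
  have h : (q ^ 2 + 1 : F) = algebraMap (Polynomial ℚ) F (Polynomial.X ^ 2 + 1) := by
    simp [q, map_add, map_pow, RatFunc.algebraMap_X]
  rw [h]
  refine RatFunc.algebraMap_ne_zero ?_
  intro hcon
  have := congrArg (Polynomial.eval 0) hcon
  simp at this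

lemma qq_ne : (q + q⁻¹ : F) ≠ 0 := by
  have h : (q + q⁻¹ : F) = (q ^ 2 + 1) / q := by
    field_simp [q_ne]
  rw [h]
  exact div_ne_zero qsq_ne q_ne

/-- Abstract form of the `q`-Serre relation computation, over a general field. -/
lemma key {K : Type*} [Field K] {A : Type*} [Ring A] [Algebra K A]
    (t c r : K) (ht : t ≠ 0) (a b g h w : A)
    (hab : a * b - b * a = c • (h - g))
    (hg : t • (a * g) - t⁻¹ • (g * a) = r • w)
    (hh : t • (h * a) - t⁻¹ • (a * h) = r • w)
    (hw : a * w = w * a) :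
    a * (t⁻¹ • (a * (t • (a * b) - t⁻¹ • (b * a))) - t • ((t • (a * b) - t⁻¹ • (b * a)) * a)) -
      (t⁻¹ • (a * (t • (a * b) - t⁻¹ • (b * a))) - t • ((t • (a * b) - t⁻¹ • (b * a)) * a)) * a
      = 0 := by
  have rb : a * b = b * a + c • h - c • g := by
    rw [smul_sub] at hab
    linear_combination (norm := abel) hab
  have rbx : ∀ x : A, a * (b * x) = b * (a * x) + c • (h * x) - c • (g * x) := by
    intro x
    have := congrArg (· * x) rb
    simpa [add_mul, sub_mul, smul_mul_assoc, mul_assoc] using this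
  have rg : a * g = (t⁻¹ * r) • w + (t⁻¹ * t⁻¹) • (g * a) := by
    have e : t • (a * g) = r • w + t⁻¹ • (g * a) := by
      linear_combination (norm := abel) hg
    have := congrArg (fun z : A => t⁻¹ • z) e
    simpa [smul_smul, inv_mul_cancel₀ ht, smul_add] using this
  have rgx : ∀ x : A, a * (g * x) = (t⁻¹ * r) • (w * x) + (t⁻¹ * t⁻¹) • (g * (a * x)) := by
    intro x
    have := congrArg (· * x) rg
    simpa [add_mul, smul_mul_assoc, mul_assoc] using this
  have rh : a * h = (t * t) • (h * a) - (t * r) • w := by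
    have e : t⁻¹ • (a * h) = t • (h * a) - r • w := by
      linear_combination (norm := abel) -hh
    have := congrArg (fun z : A => t • z) e
    simpa [smul_smul, mul_inv_cancel₀ ht, smul_sub] using this
  have rhx : ∀ x : A, a * (h * x) = (t * t) • (h * (a * x)) - (t * r) • (w * x) := by
    intro x
    have := congrArg (· * x) rh
    simpa [sub_mul, smul_mul_assoc, mul_assoc] using this
  have rwx : ∀ x : A, a * (w * x) = w * (a * x) := by
    intro x
    have := congrArg (· * x) hw
    simpa [mul_assoc] using this
  simp only [mul_sub, sub_mul, mul_smul_comm, smul_mul_assoc, smul_sub, smul_smul, mul_assoc]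
  simp only [rb, rbx, rg, rgx, rh, rhx, hw, rwx, mul_add, mul_sub, smul_add, smul_sub,
    mul_smul_comm, smul_smul]
  have hs : t * t⁻¹ = 1 := mul_inv_cancel₀ ht
  match_scalars
  · ring
  · linear_combination (c * t ^ 4 - c * t * t⁻¹) * hs
  · linear_combination (c * t * t⁻¹ - c * t⁻¹ ^ 4) * hs
  · linear_combination (-(c * r * t⁻¹ ^ 3) - c * r * t ^ 3) * hs

/-- In `𝒜q`, the generators `W_0 = W_{-0}` and `W_1` satisfy the `q`-Serre relations
`[W_0, [W_0, [W_0, W_1]_q]_{q⁻¹}] = 0` and `[W_1, [W_1, [W_1, W_0]_q]_{q⁻¹}] = 0`. -/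
theorem statement7 (ρ : F) (hρ : ρ ≠ 0) :
    br (Wm ρ 0) (qbr' (Wm ρ 0) (qbr (Wm ρ 0) (Wp ρ 0))) = 0 ∧
    br (Wp ρ 0) (qbr' (Wp ρ 0) (qbr (Wp ρ 0) (Wm ρ 0))) = 0 := by
  constructor
  · have h1 := RingQuot.mkAlgHom_rel F (rel.r1a (ρ := ρ) 0)
    have h2 := RingQuot.mkAlgHom_rel F (rel.r2a (ρ := ρ) 0)
    have h3 := RingQuot.mkAlgHom_rel F (rel.r2b (ρ := ρ) 0)
    have h4 := RingQuot.mkAlgHom_rel F (rel.r4a (ρ := ρ) 0 1)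
    simp only [br, qbr, map_sub, map_smul, map_mul, map_add, map_zero] at h1 h2 h3 h4
    have h4' : Wm ρ 0 * Wm ρ 1 = Wm ρ 1 * Wm ρ 0 := sub_eq_zero.mp h4
    simp only [br, qbr, qbr', Wm, Wp, G, Gt]
    exact key q (q + q⁻¹)⁻¹ ρ q_ne _ _ _ _ _ h1 h2 h3 h4'
  · have h1 := RingQuot.mkAlgHom_rel F (rel.r1a (ρ := ρ) 0)
    have h2 := RingQuot.mkAlgHom_rel F (rel.r3b (ρ := ρ) 0)
    have h3 := RingQuot.mkAlgHom_rel F (rel.r3a (ρ := ρ) 0)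
    have h4 := RingQuot.mkAlgHom_rel F (rel.r4b (ρ := ρ) 0 1)
    simp only [br, qbr, map_sub, map_smul, map_mul, map_add, map_zero] at h1 h2 h3 h4
    have h4' : Wp ρ 0 * Wp ρ 1 = Wp ρ 1 * Wp ρ 0 := sub_eq_zero.mp h4
    have hab : Wp ρ 0 * Wm ρ 0 - Wm ρ 0 * Wp ρ 0
        = (q + q⁻¹)⁻¹ • ((G ρ 0 : Aq ρ) - Gt ρ 0) := by
      simp only [Wm, Wp, G, Gt]
      rw [smul_sub] at h1 ⊢
      linear_combination (norm := abel) -h1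
    simp only [br, qbr, qbr', Wm, Wp, G, Gt] at hab ⊢
    exact key q (q + q⁻¹)⁻¹ ρ q_ne _ _ _ _ _ hab h2 h3 h4'


end Alt
end
end
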